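/- Let (X₁, φ₁) and (X₂, φ₂) be Cantor minimal ℤ-systems, let X = X₁ × X₂ with the product ℤ²-action φ^{(n,m)}(x₁,x₂) = (φ₁ⁿ(x₁), φ₂ᵐ(x₂)), and let π : (Y, ψ) → (X, φ) be a factor map from a Cantor minimal ℤ²-system. Fix p_i ∈ X_i and clopen sets U_i ⊆ X_i with p_i ∉ U_i and φ_i(p_i) ∉ U_i (i = 1,2); set B = ({p₁} × U₂) ∪ (U₁ × {p₂}), B* = ({φ₁(p₁)} × U₂) ∪ (U₁ × {φ₂(p₂)}), C = π^{-1}(B) and C* = π^{-1}(B*). Define γ : C → C* by γ(y) = ψ^{(1,0)}(y) if π(y) ∈ {p₁} × U₂ and γ(y) = ψ^{(0,1)}(y) if π(y) ∈ U₁ × {p₂}. Then: (1) γ is a well-defined homeomorphism from C onto C*; and (2) if R' ⊆ R_φ is an equivalence relation on X such that for all x, x' ∈ B one has (x,x') ∈ R' if and only if (β(x), β(x')) ∈ R', where β : B → B* is given by β(p₁,x₂) = (φ₁(p₁), x₂) and β(x₁,p₂) = (x₁, φ₂(p₂)), then for S = {(y,y') ∈ R_ψ : (π(y),π(y')) ∈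 R'} and all y, y' ∈ C, (y,y') ∈ S if and only if (γ(y), γ(y')) ∈ S; in particular γ induces a bijection between S ∩ (C × C) and S ∩ (C* × C*). -/

import Mathlib

/-- A free minimal action of `ℤ²` by homeomorphisms on a topological space `X`
(the data of a Cantor minimal `ℤ²`-system, the Cantor-set conditions on `X` being
carried separately). -/
structure Z2System (X : Type) [TopologicalSpace X] where
  act : ℤ × ℤ → X → X
  continuous_act : ∀ a, Continuous (act a)
  act_zero : ∀ x, act 0 x = x
  act_add : ∀ a b x, act (a + b) x = act a (act b x)
  free : ∀ a x, act a x = x → a = 0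
  minimal : ∀ x, Dense (Set.range fun a => act a x)

/-- The orbit equivalence relation `R_φ = {(x, φ^a(x)) : x ∈ X, a ∈ ℤ²}`. -/
def Z2System.orbitRel {X : Type} [TopologicalSpace X] (φ : Z2System X) : Set (X × X) :=
  {p | ∃ a : ℤ × ℤ, p.2 = φ.act a p.1}

/-- An equivalence relation on `X`, viewed as a subset of `X × X`. -/
def IsEquivSetRel {X : Type*} (R : Set (X × X)) : Prop :=
  (∀ x, (x, x) ∈ R) ∧ (∀ x y, (x, y) ∈ R → (y, x) ∈ R) ∧
    (∀ x y z, (x, y) ∈ R → (y, z) ∈ R → (x, z) ∈ R)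

/-- The subset of `X × X` presented by a set `R̂ ⊆ X × ℤ²`, namely
`{(x, φ^a(x)) : (x, a) ∈ R̂}`. -/
def Z2System.relOf {X : Type} [TopologicalSpace X] (φ : Z2System X)
    (Rhat : Set (X × (ℤ × ℤ))) : Set (X × X) :=
  {p | ∃ a : ℤ × ℤ, (p.1, a) ∈ Rhat ∧ p.2 = φ.act a p.1}

/-- The lift `Ŝ = {(y, a) : (π(y), a) ∈ R̂}` of a set `R̂ ⊆ X × ℤ²` along `π : Y → X`. -/
def liftHat {X Y : Type} (π : Y → X) (Rhat : Set (X × (ℤ × ℤ))) : Set (Y × (ℤ × ℤ)) :=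
  {q | (π q.1, q.2) ∈ Rhat}

attribute [local instance] Classical.propDecidable


namespace GammaAux

lemma orbit_mem {X : Type} [TopologicalSpace X] (φ : Z2System X) (a : ℤ × ℤ) (x : X) :
    (x, φ.act a x) ∈ φ.orbitRel := ⟨a, rfl⟩

lemma orbit_symm {X : Type} [TopologicalSpace X] (φ : Z2System X) {x y : X}
    (h : (x, y) ∈ φ.orbitRel) : (y, x) ∈ φ.orbitRel := by
  obtain ⟨a, ha⟩ := h
  refine ⟨-a, ?_⟩
  simp only at ha ⊢
  rw [ha, ← φ.act_add, neg_add_cancel, φ.act_zero]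

lemma orbit_trans {X : Type} [TopologicalSpace X] (φ : Z2System X) {x y z : X}
    (h1 : (x, y) ∈ φ.orbitRel) (h2 : (y, z) ∈ φ.orbitRel) : (x, z) ∈ φ.orbitRel := by
  obtain ⟨a, ha⟩ := h1; obtain ⟨b, hb⟩ := h2
  exact ⟨b + a, by simp only at ha hb ⊢; rw [hb, ha, φ.act_add]⟩

end GammaAux

/-- The inverse of the map `γ`. -/
noncomputable def gammaInv {X₁ X₂ Y : Type} [TopologicalSpace Y] (ψ : Z2System Y) (π : Y → X₁ × X₂)
    (p₁ : X₁) (φ₁ : Equiv.Perm X₁) (U₂ : Set X₂) (z : Y) : Y :=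
  if (π z).1 = φ₁ p₁ ∧ (π z).2 ∈ U₂ then ψ.act (-(1, 0) : ℤ × ℤ) z
  else ψ.act (-(0, 1) : ℤ × ℤ) z

/-- The product `ℤ²`-action of two homeomorphisms:
`φ^(n,m)(x₁,x₂) = (φ₁^n x₁, φ₂^m x₂)`. -/
def prodAct {X₁ X₂ : Type} (φ₁ : Equiv.Perm X₁) (φ₂ : Equiv.Perm X₂)
    (a : ℤ × ℤ) (x : X₁ × X₂) : X₁ × X₂ :=
  ((φ₁ ^ a.1) x.1, (φ₂ ^ a.2) x.2)

/-!
STATEMENT 15 (from the proof of the main theorem). With `X = X₁ × X₂` a product of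
two Cantor minimal ℤ-systems carrying the product ℤ²-action, `π : (Y,ψ) → (X,φ)` a
factor map, `B`, `B*`, `C = π⁻¹(B)`, `C* = π⁻¹(B*)`, `β : B → B*` and `γ : C → C*`
as in the paper: (1) `γ` is a well-defined homeomorphism from `C` onto `C*`; and
(2) if `R' ⊆ R_φ` is an equivalence relation with `(x,x') ∈ R' ↔ (β(x),β(x')) ∈ R'`
for `x, x' ∈ B`, then for `S = {(y,y') ∈ R_ψ : (π(y),π(y')) ∈ R'}` and `y, y' ∈ C`
one has `(y,y') ∈ S ↔ (γ(y),γ(y')) ∈ S`; in particular `γ` induces a bijection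
between `S ∩ (C × C)` and `S ∩ (C* × C*)`.
-/
theorem gamma_homeomorphism_and_preserves_S
    {X₁ X₂ Y : Type} [TopologicalSpace X₁] [TopologicalSpace X₂] [TopologicalSpace Y]
    -- X₁, X₂ and Y are Cantor sets
    [Nonempty X₁] [CompactSpace X₁] [TopologicalSpace.MetrizableSpace X₁]
    [TotallyDisconnectedSpace X₁] (hX₁ : ∀ x : X₁, ¬ IsOpen ({x} : Set X₁))
    [Nonempty X₂] [CompactSpace X₂] [TopologicalSpace.MetrizableSpace X₂]
    [TotallyDisconnectedSpace X₂] (hX₂ : ∀ x : X₂, ¬ IsOpen ({x} : Set X₂))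
    [Nonempty Y] [CompactSpace Y] [TopologicalSpace.MetrizableSpace Y]
    [TotallyDisconnectedSpace Y] (hY : ∀ y : Y, ¬ IsOpen ({y} : Set Y))
    -- (X₁, φ₁) and (X₂, φ₂) are Cantor minimal ℤ-systems
    (φ₁ : Equiv.Perm X₁) (hφ₁ : IsHomeomorph ⇑φ₁)
    (hmin₁ : ∀ x : X₁, Dense (Set.range fun n : ℤ => (φ₁ ^ n) x))
    (φ₂ : Equiv.Perm X₂) (hφ₂ : IsHomeomorph ⇑φ₂)
    (hmin₂ : ∀ x : X₂, Dense (Set.range fun n : ℤ => (φ₂ ^ n) x))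
    -- (Y, ψ) is a Cantor minimal ℤ²-system and π a factor map onto (X₁ × X₂, φ)
    (ψ : Z2System Y)
    (π : Y → X₁ × X₂) (hπcont : Continuous π) (hπsurj : Function.Surjective π)
    (hπequiv : ∀ (a : ℤ × ℤ) (y : Y), π (ψ.act a y) = prodAct φ₁ φ₂ a (π y))
    -- the points pᵢ and the clopen sets Uᵢ
    (p₁ : X₁) (p₂ : X₂)
    (U₁ : Set X₁) (hU₁ : IsClopen U₁) (hp₁U : p₁ ∉ U₁) (hφp₁U : φ₁ p₁ ∉ U₁)
    (U₂ : Set X₂) (hU₂ : IsClopen U₂) (hp₂U : p₂ ∉ U₂) (hφp₂U : φ₂ p₂ ∉ U₂)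
    -- the sets B, B*, C = π⁻¹(B), C* = π⁻¹(B*)
    (B Bstar : Set (X₁ × X₂))
    (hB : B = ({p₁} : Set X₁) ×ˢ U₂ ∪ U₁ ×ˢ ({p₂} : Set X₂))
    (hBstar : Bstar = ({φ₁ p₁} : Set X₁) ×ˢ U₂ ∪ U₁ ×ˢ ({φ₂ p₂} : Set X₂))
    (C Cstar : Set Y) (hC : C = π ⁻¹' B) (hCstar : Cstar = π ⁻¹' Bstar)
    -- the maps γ and β
    (γ : Y → Y)
    (hγ : ∀ y : Y, γ y = if π y ∈ ({p₁} : Set X₁) ×ˢ U₂ then ψ.act ((1, 0) : ℤ × ℤ) y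
      else ψ.act ((0, 1) : ℤ × ℤ) y)
    (β : X₁ × X₂ → X₁ × X₂)
    (hβ : ∀ x : X₁ × X₂, β x = if x ∈ ({p₁} : Set X₁) ×ˢ U₂ then (φ₁ p₁, x.2)
      else (x.1, φ₂ p₂))
    -- the equivalence relation R' ⊆ R_φ, compatible with β on B
    (R' : Set ((X₁ × X₂) × (X₁ × X₂)))
    (hR'sub : R' ⊆ {p | ∃ a : ℤ × ℤ, p.2 = prodAct φ₁ φ₂ a p.1})
    (hR'equiv : IsEquivSetRel R')
    (hβR' : ∀ x ∈ B, ∀ x' ∈ B, ((x, x') ∈ R' ↔ (β x, β x') ∈ R')) :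
    -- (1) γ is a well-defined homeomorphism from C onto C*
    (∃ e : C ≃ₜ Cstar, ∀ y : C, (e y : Y) = γ (y : Y)) ∧
    -- (2) γ respects S = {(y,y') ∈ R_ψ : (π(y),π(y')) ∈ R'} on C, and induces a
    -- bijection between S ∩ (C × C) and S ∩ (C* × C*)
    (∀ y ∈ C, ∀ y' ∈ C,
      (((y, y') ∈ ψ.orbitRel ∧ (π y, π y') ∈ R') ↔
        ((γ y, γ y') ∈ ψ.orbitRel ∧ (π (γ y), π (γ y')) ∈ R'))) ∧
    Set.BijOn (Prod.map γ γ)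
      ({p : Y × Y | p ∈ ψ.orbitRel ∧ (π p.1, π p.2) ∈ R'} ∩ C ×ˢ C)
      ({p : Y × Y | p ∈ ψ.orbitRel ∧ (π p.1, π p.2) ∈ R'} ∩ Cstar ×ˢ Cstar) := by
    classical
  have hact10 : ∀ x : X₁ × X₂, prodAct φ₁ φ₂ (1, 0) x = (φ₁ x.1, x.2) := by
    intro x; simp [prodAct]
  have hact01 : ∀ x : X₁ × X₂, prodAct φ₁ φ₂ (0, 1) x = (x.1, φ₂ x.2) := by
    intro x; simp [prodAct]
  have hactn10 : ∀ x : X₁ × X₂, prodAct φ₁ φ₂ (-(1, 0)) x = (φ₁⁻¹ x.1, x.2) := by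
    intro x; simp [prodAct]
  have hactn01 : ∀ x : X₁ × X₂, prodAct φ₁ φ₂ (-(0, 1)) x = (x.1, φ₂⁻¹ x.2) := by
    intro x; simp [prodAct]
  have hcancel1 : ∀ (a : ℤ × ℤ) (y : Y), ψ.act (-a) (ψ.act a y) = y := by
    intro a y; rw [← ψ.act_add, neg_add_cancel, ψ.act_zero]
  have hcancel2 : ∀ (a : ℤ × ℤ) (y : Y), ψ.act a (ψ.act (-a) y) = y := by
    intro a y; rw [← ψ.act_add, add_neg_cancel, ψ.act_zero]
  have hBcase : ∀ x ∈ B, (x.1 = p₁ ∧ x.2 ∈ U₂) ∨ (x.1 ∈ U₁ ∧ x.2 = p₂) := by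
    intro x hx; rw [hB] at hx
    rcases hx with h | h
    · exact Or.inl ⟨h.1, h.2⟩
    · exact Or.inr ⟨h.1, h.2⟩
  have hBstarcase : ∀ x ∈ Bstar, (x.1 = φ₁ p₁ ∧ x.2 ∈ U₂) ∨ (x.1 ∈ U₁ ∧ x.2 = φ₂ p₂) := by
    intro x hx; rw [hBstar] at hx
    rcases hx with h | h
    · exact Or.inl ⟨h.1, h.2⟩
    · exact Or.inr ⟨h.1, h.2⟩
  have hγspec : ∀ y ∈ C,
      ((π y).1 = p₁ ∧ (π y).2 ∈ U₂ ∧ γ y = ψ.act (1, 0) y ∧ π (γ y) = (φ₁ p₁, (π y).2)) ∨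
      ((π y).1 ∈ U₁ ∧ (π y).2 = p₂ ∧ γ y = ψ.act (0, 1) y ∧ π (γ y) = ((π y).1, φ₂ p₂)) := by
    intro y hy
    have hyB : π y ∈ B := by rw [hC] at hy; exact hy
    rcases hBcase _ hyB with ⟨h1, h2⟩ | ⟨h1, h2⟩
    · have hmem : π y ∈ ({p₁} : Set X₁) ×ˢ U₂ := ⟨h1, h2⟩
      have h3 : γ y = ψ.act (1, 0) y := by rw [hγ, if_pos hmem]
      exact Or.inl ⟨h1, h2, h3, by rw [h3, hπequiv, hact10, h1]⟩
    · have hmem : π y ∉ ({p₁} : Set X₁) ×ˢ U₂ := by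
        rintro ⟨hq1, -⟩
        simp only [Set.mem_singleton_iff] at hq1
        exact hp₁U (by rw [← hq1]; exact h1)
      have h3 : γ y = ψ.act (0, 1) y := by rw [hγ, if_neg hmem]
      exact Or.inr ⟨h1, h2, h3, by rw [h3, hπequiv, hact01, h2]⟩
  have heC : ∀ y : Y, y ∈ C → γ y ∈ Cstar := by
    intro y hy
    rcases hγspec y hy with ⟨-, h2, -, h4⟩ | ⟨h1, -, -, h4⟩
    · rw [hCstar]
      refine Set.mem_preimage.mpr ?_
      rw [hBstar]
      exact Set.mem_union_left _ (by rw [h4]; exact ⟨rfl, h2⟩)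
    · rw [hCstar]
      refine Set.mem_preimage.mpr ?_
      rw [hBstar]
      exact Set.mem_union_right _ (by rw [h4]; exact ⟨h1, rfl⟩)
  have hβγ : ∀ y ∈ C, π (γ y) = β (π y) := by
    intro y hy
    rcases hγspec y hy with ⟨h1, h2, -, h4⟩ | ⟨h1, -, -, h4⟩
    · rw [h4, hβ, if_pos (show π y ∈ ({p₁} : Set X₁) ×ˢ U₂ from ⟨h1, h2⟩)]
    · have hmem : π y ∉ ({p₁} : Set X₁) ×ˢ U₂ := by
        rintro ⟨hq1, -⟩
        simp only [Set.mem_singleton_iff] at hq1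
        exact hp₁U (by rw [← hq1]; exact h1)
      rw [h4, hβ, if_neg hmem]
  have hγ'spec : ∀ z ∈ Cstar,
      gammaInv ψ π p₁ φ₁ U₂ z ∈ C ∧ γ (gammaInv ψ π p₁ φ₁ U₂ z) = z := by
    intro z hz
    have hzB : π z ∈ Bstar := by rw [hCstar] at hz; exact hz
    rcases hBstarcase _ hzB with ⟨h1, h2⟩ | ⟨h1, h2⟩
    · have hcond : (π z).1 = φ₁ p₁ ∧ (π z).2 ∈ U₂ := ⟨h1, h2⟩
      have h3 : gammaInv ψ π p₁ φ₁ U₂ z = ψ.act (-(1, 0)) z := by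
        simp only [gammaInv]; rw [if_pos hcond]
      have h4 : π (gammaInv ψ π p₁ φ₁ U₂ z) = (p₁, (π z).2) := by
        rw [h3, hπequiv, hactn10, h1, Equiv.Perm.coe_inv, Equiv.symm_apply_apply]
      have hmem : π (gammaInv ψ π p₁ φ₁ U₂ z) ∈ ({p₁} : Set X₁) ×ˢ U₂ := by
        rw [h4]; exact ⟨rfl, h2⟩
      refine ⟨?_, ?_⟩
      · rw [hC]
        refine Set.mem_preimage.mpr ?_
        rw [hB]
        exact Set.mem_union_left _ hmem
      · rw [hγ, if_pos hmem, h3, hcancel2]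
    · have hcond : ¬((π z).1 = φ₁ p₁ ∧ (π z).2 ∈ U₂) := by
        rintro ⟨hq, -⟩
        exact hφp₁U (by rw [← hq]; exact h1)
      have h3 : gammaInv ψ π p₁ φ₁ U₂ z = ψ.act (-(0, 1)) z := by
        simp only [gammaInv]; rw [if_neg hcond]
      have h4 : π (gammaInv ψ π p₁ φ₁ U₂ z) = ((π z).1, p₂) := by
        rw [h3, hπequiv, hactn01, h2, Equiv.Perm.coe_inv, Equiv.symm_apply_apply]
      have hmem : π (gammaInv ψ π p₁ φ₁ U₂ z) ∉ ({p₁} : Set X₁) ×ˢ U₂ := by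
        rw [h4]
        rintro ⟨hq1, -⟩
        simp only [Set.mem_singleton_iff] at hq1
        exact hp₁U (by rw [← hq1]; exact h1)
      refine ⟨?_, ?_⟩
      · rw [hC]
        refine Set.mem_preimage.mpr ?_
        rw [hB]
        exact Set.mem_union_right _ (by rw [h4]; exact ⟨h1, rfl⟩)
      · rw [hγ, if_neg hmem, h3, hcancel2]
  have hγ'γ : ∀ y ∈ C, gammaInv ψ π p₁ φ₁ U₂ (γ y) = y := by
    intro y hy
    rcases hγspec y hy with ⟨h1, h2, h3, h4⟩ | ⟨h1, h2, h3, h4⟩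
    · have hcond : (π (γ y)).1 = φ₁ p₁ ∧ (π (γ y)).2 ∈ U₂ := by
        rw [h4]; exact ⟨rfl, h2⟩
      simp only [gammaInv]
      rw [if_pos hcond, h3, hcancel1]
    · have hcond : ¬((π (γ y)).1 = φ₁ p₁ ∧ (π (γ y)).2 ∈ U₂) := by
        rw [h4]
        rintro ⟨hq, -⟩
        exact hφp₁U (by rw [← hq]; exact h1)
      simp only [gammaInv]
      rw [if_neg hcond, h3, hcancel1]
  -- closedness and compactness
  have hS₁closed : IsClosed (({p₁} : Set X₁) ×ˢ U₂) := isClosed_singleton.prod hU₂.isClosed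
  have hS₂closed : IsClosed (U₁ ×ˢ ({p₂} : Set X₂)) := hU₁.isClosed.prod isClosed_singleton
  have hCclosed : IsClosed C := by
    rw [hC, hB]; exact (hS₁closed.union hS₂closed).preimage hπcont
  haveI : CompactSpace C := isCompact_iff_compactSpace.mp hCclosed.isCompact
  -- continuity of γ on C
  have hγcont : Continuous (fun y : C => γ (y : Y)) := by
    have heq : (fun y : C => γ (y : Y)) = fun y : C =>
        if π (y : Y) ∈ ({p₁} : Set X₁) ×ˢ U₂ then ψ.act (1, 0) (y : Y)
        else ψ.act (0, 1) (y : Y) := by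
      funext y; rw [hγ]
    rw [heq]
    have hclopen : IsClopen {y : C | π (y : Y) ∈ ({p₁} : Set X₁) ×ˢ U₂} := by
      constructor
      · exact hS₁closed.preimage (hπcont.comp continuous_subtype_val)
      · rw [← isClosed_compl_iff]
        have hcompl : {y : C | π (y : Y) ∈ ({p₁} : Set X₁) ×ˢ U₂}ᶜ
            = {y : C | π (y : Y) ∈ U₁ ×ˢ ({p₂} : Set X₂)} := by
          ext y
          simp only [Set.mem_compl_iff, Set.mem_setOf_eq]
          constructor
          · intro h
            have hyB : π (y : Y) ∈ B := hC.le y.2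
            rcases hBcase _ hyB with ⟨h1, h2⟩ | ⟨h1, h2⟩
            · exact absurd ⟨h1, h2⟩ h
            · exact ⟨h1, h2⟩
          · rintro ⟨h1, -⟩ ⟨hq1, -⟩
            simp only [Set.mem_singleton_iff] at hq1
            exact hp₁U (by rw [← hq1]; exact h1)
        rw [hcompl]
        exact hS₂closed.preimage (hπcont.comp continuous_subtype_val)
    apply Continuous.if
    · intro a ha
      rw [isClopen_iff_frontier_eq_empty.mp hclopen] at ha
      exact absurd ha (Set.notMem_empty a)
    · exact (ψ.continuous_act _).comp continuous_subtype_val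
    · exact (ψ.continuous_act _).comp continuous_subtype_val
  -- the homeomorphism
  let eEquiv : C ≃ Cstar :=
    { toFun := fun y => ⟨γ (y : Y), heC _ y.2⟩
      invFun := fun z => ⟨gammaInv ψ π p₁ φ₁ U₂ (z : Y), (hγ'spec _ z.2).1⟩
      left_inv := fun y => Subtype.ext (hγ'γ _ y.2)
      right_inv := fun z => Subtype.ext ((hγ'spec _ z.2).2) }
  have hcontE : Continuous eEquiv := by
    show Continuous fun y : C => (⟨γ (y : Y), heC _ y.2⟩ : Cstar)
    exact hγcont.subtype_mk _
  -- part 2 statement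
  have horbmap : ∀ y : Y, ∃ a : ℤ × ℤ, γ y = ψ.act a y := by
    intro y; rw [hγ]
    split_ifs
    · exact ⟨(1, 0), rfl⟩
    · exact ⟨(0, 1), rfl⟩
  have hpart2 : ∀ y ∈ C, ∀ y' ∈ C,
      (((y, y') ∈ ψ.orbitRel ∧ (π y, π y') ∈ R') ↔
        ((γ y, γ y') ∈ ψ.orbitRel ∧ (π (γ y), π (γ y')) ∈ R')) := by
    intro y hy y' hy'
    obtain ⟨a, ha⟩ := horbmap y
    obtain ⟨a', ha'⟩ := horbmap y'
    have hyB : π y ∈ B := by rw [hC] at hy; exact hy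
    have hy'B : π y' ∈ B := by rw [hC] at hy'; exact hy'
    have hβ1 : π (γ y) = β (π y) := hβγ y hy
    have hβ2 : π (γ y') = β (π y') := hβγ y' hy'
    have hoy : (y, γ y) ∈ ψ.orbitRel := ⟨a, ha⟩
    have hoy' : (y', γ y') ∈ ψ.orbitRel := ⟨a', ha'⟩
    constructor
    · rintro ⟨ho, hr⟩
      refine ⟨?_, ?_⟩
      · exact GammaAux.orbit_trans ψ (GammaAux.orbit_trans ψ (GammaAux.orbit_symm ψ hoy) ho) hoy'
      · rw [hβ1, hβ2]
        exact (hβR' _ hyB _ hy'B).mp hr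
    · rintro ⟨ho, hr⟩
      refine ⟨?_, ?_⟩
      · exact GammaAux.orbit_trans ψ (GammaAux.orbit_trans ψ hoy ho) (GammaAux.orbit_symm ψ hoy')
      · rw [hβ1, hβ2] at hr
        exact (hβR' _ hyB _ hy'B).mpr hr
  refine ⟨⟨hcontE.homeoOfEquivCompactToT2, fun y => rfl⟩, hpart2, ?_, ?_, ?_⟩
  · -- MapsTo
    rintro ⟨y, y'⟩ ⟨hS, hy, hy'⟩
    exact ⟨(hpart2 y hy y' hy').mp hS, heC y hy, heC y' hy'⟩
  · -- InjOn
    rintro ⟨y, y'⟩ ⟨-, hy, hy'⟩ ⟨z, z'⟩ ⟨-, hz, hz'⟩ heq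
    have h1 : γ y = γ z := congrArg Prod.fst heq
    have h2 : γ y' = γ z' := congrArg Prod.snd heq
    have e1 : y = z := by
      have := congrArg (gammaInv ψ π p₁ φ₁ U₂) h1
      rwa [hγ'γ y hy, hγ'γ z hz] at this
    have e2 : y' = z' := by
      have := congrArg (gammaInv ψ π p₁ φ₁ U₂) h2
      rwa [hγ'γ y' hy', hγ'γ z' hz'] at this
    rw [e1, e2]
  · -- SurjOn
    rintro ⟨z, z'⟩ ⟨hS, hz, hz'⟩
    obtain ⟨hc1, hg1⟩ := hγ'spec z hz
    obtain ⟨hc2, hg2⟩ := hγ'spec z' hz'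
    refine ⟨(gammaInv ψ π p₁ φ₁ U₂ z, gammaInv ψ π p₁ φ₁ U₂ z'), ⟨?_, hc1, hc2⟩, ?_⟩
    · refine (hpart2 _ hc1 _ hc2).mpr ?_
      rw [hg1, hg2]
      exact hS
    · exact Prod.ext hg1 hg2
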